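/- arXiv:1910.09776 — 4 statements merged into one kernel-verified Lean document; each statement's English description precedes it below -/
import Mathlib

section
/- Let a, b, c, d be real numbers with d ≠ 0, set A = a + b and k = 2A, and assume c ≠ k. Define S to be the set of pairs (r, z) with r > 0 and z > −1 such that both 3d·r² + 4z(1+z)²·(A + (A+c)z) = 0 and d·r² + 2c·z²(1+z)² = 0. If c·A ≠ 0, c/d < 0, and c lies outside the closed interval with endpoints 0 and k, then S consists of exactly one point, namely (r₀, z₀) with z₀ = k/(c − k) and r₀ = √(−8A²c³/((c−k)⁴·d)). In all other cases (i.e., if c·A = 0, or c/d ≥ 0, or c belongs to the closed interval with endpoints 0 and k), S is empty. -/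
/-- Forward direction: any point of `S` forces the parameter conditions and equals the
explicit point. -/
lemma averaged_aux_forward (c d A k : ℝ) (hd : d ≠ 0) (hk : k = 2 * A) (hck : c ≠ k)
    (r z : ℝ) (hr : 0 < r) (hz : -1 < z)
    (h1 : 3 * d * r ^ 2 + 4 * z * (1 + z) ^ 2 * (A + (A + c) * z) = 0)
    (h2 : d * r ^ 2 + 2 * c * z ^ 2 * (1 + z) ^ 2 = 0) :
    (c * A ≠ 0 ∧ c / d < 0 ∧ c ∉ Set.uIcc 0 k) ∧
      r = Real.sqrt (-8 * A ^ 2 * c ^ 3 / ((c - k) ^ 4 * d)) ∧ z = k / (c - k) := by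
  subst hk
  have hckz : c - 2 * A ≠ 0 := sub_ne_zero.mpr hck
  have hz1 : 0 < 1 + z := by linarith
  have hr2 : 0 < r ^ 2 := by positivity
  have hc0 : c ≠ 0 := by
    intro h
    have h2' : d * r ^ 2 = 0 := by rw [h] at h2; linarith
    exact hd ((mul_eq_zero.mp h2').resolve_right (by positivity))
  have hz0 : z ≠ 0 := by
    intro h
    have h2' : d * r ^ 2 = 0 := by rw [h] at h2; linarith
    exact hd ((mul_eq_zero.mp h2').resolve_right (by positivity))
  have h4 : 2 * z * (1 + z) ^ 2 * (2 * A + (2 * A - c) * z) = 0 := by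
    linear_combination h1 - 3 * h2
  have h5 : 2 * A + (2 * A - c) * z = 0 := by
    have hne : 2 * z * (1 + z) ^ 2 ≠ 0 :=
      mul_ne_zero (mul_ne_zero two_ne_zero hz0) (pow_ne_zero _ hz1.ne')
    exact (mul_eq_zero.mp h4).resolve_left hne
  have hA0 : A ≠ 0 := by
    intro h
    rw [h] at h5
    have : c * z = 0 := by linarith
    rcases mul_eq_zero.mp this with h' | h'
    · exact hc0 h'
    · exact hz0 h'
  have hzval : z = 2 * A / (c - 2 * A) := by
    field_simp
    linear_combination -h5
  have h1z : (1 + z) * (c - 2 * A) = c := by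
    rw [hzval]; field_simp; ring
  have hsq : 0 < (c - 2 * A) ^ 2 := by positivity
  have hcc : 0 < c * (c - 2 * A) := by
    have heq : c * (c - 2 * A) = (1 + z) * (c - 2 * A) ^ 2 := by
      linear_combination (-(c - 2 * A)) * h1z
    rw [heq]; exact mul_pos hz1 hsq
  have hnotI : c ∉ Set.uIcc 0 (2 * A) := by
    rw [Set.mem_uIcc]
    rintro (⟨ha1, ha2⟩ | ⟨ha1, ha2⟩) <;> nlinarith
  have hzz : 0 < z ^ 2 * (1 + z) ^ 2 := by positivity
  have h6 : d ^ 2 * r ^ 2 = -2 * (c * d) * (z ^ 2 * (1 + z) ^ 2) := by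
    linear_combination d * h2
  have hdr : 0 < d ^ 2 * r ^ 2 := by positivity
  have hcd : c * d < 0 := by nlinarith
  have hcdiv : c / d < 0 := by
    rcases lt_or_gt_of_ne hd with h | h
    · exact div_neg_of_pos_of_neg (by nlinarith) h
    · exact div_neg_of_neg_of_pos (by nlinarith) h
  have hr2v : r ^ 2 = -8 * A ^ 2 * c ^ 3 / ((c - 2 * A) ^ 4 * d) := by
    have h2' : r ^ 2 = -2 * c * z ^ 2 * (1 + z) ^ 2 / d := by
      field_simp
      linear_combination h2
    rw [h2', hzval]
    field_simp
    ring
  refine ⟨⟨mul_ne_zero hc0 hA0, hcdiv, hnotI⟩, ?_, hzval⟩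
  rw [← hr2v]
  exact (Real.sqrt_sq hr.le).symm

/-- Reverse direction: under the parameter conditions the explicit point satisfies the
defining conditions of `S`. -/
lemma averaged_aux_mem (c d A k : ℝ) (hd : d ≠ 0) (hk : k = 2 * A) (hck : c ≠ k)
    (hcA : c * A ≠ 0) (hcd : c / d < 0) (hI : c ∉ Set.uIcc 0 k) :
    0 < Real.sqrt (-8 * A ^ 2 * c ^ 3 / ((c - k) ^ 4 * d)) ∧ -1 < k / (c - k) ∧
      3 * d * (Real.sqrt (-8 * A ^ 2 * c ^ 3 / ((c - k) ^ 4 * d))) ^ 2 +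
        4 * (k / (c - k)) * (1 + k / (c - k)) ^ 2 * (A + (A + c) * (k / (c - k))) = 0 ∧
      d * (Real.sqrt (-8 * A ^ 2 * c ^ 3 / ((c - k) ^ 4 * d))) ^ 2 +
        2 * c * (k / (c - k)) ^ 2 * (1 + k / (c - k)) ^ 2 = 0 := by
  subst hk
  have hckz : c - 2 * A ≠ 0 := sub_ne_zero.mpr hck
  have hc0 : c ≠ 0 := fun h => hcA (by rw [h]; ring)
  have hA0 : A ≠ 0 := fun h => hcA (by rw [h]; ring)
  have hsgn := div_neg_iff.mp hcd
  have hcc : 0 < c * (c - 2 * A) := by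
    by_contra hcon
    push_neg at hcon
    apply hI
    rw [Set.mem_uIcc]
    rcases lt_trichotomy c 0 with hlt | heq | hgt
    · right; exact ⟨by nlinarith, hlt.le⟩
    · exact absurd heq hc0
    · left; exact ⟨hgt.le, by nlinarith⟩
  have hsq4 : 0 < (c - 2 * A) ^ 4 := by positivity
  have hA2 : 0 < A ^ 2 := by positivity
  have hE : 0 < -8 * A ^ 2 * c ^ 3 / ((c - 2 * A) ^ 4 * d) := by
    rcases hsgn with ⟨hcp, hdn⟩ | ⟨hcn, hdp⟩
    · exact div_pos_iff.mpr (Or.inr ⟨by nlinarith [mul_pos hA2 (pow_pos hcp 3)],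
        by nlinarith⟩)
    · have hc2 : 0 < c ^ 2 := by positivity
      have hc3 : c ^ 3 < 0 := by nlinarith
      exact div_pos_iff.mpr (Or.inl ⟨by nlinarith [mul_pos hA2 (neg_pos.mpr hc3)],
        by nlinarith⟩)
  have hr0 : 0 < Real.sqrt (-8 * A ^ 2 * c ^ 3 / ((c - 2 * A) ^ 4 * d)) :=
    Real.sqrt_pos.mpr hE
  have hr0sq : (Real.sqrt (-8 * A ^ 2 * c ^ 3 / ((c - 2 * A) ^ 4 * d))) ^ 2 =
      -8 * A ^ 2 * c ^ 3 / ((c - 2 * A) ^ 4 * d) := Real.sq_sqrt hE.le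
  have hzpos : 0 < c / (c - 2 * A) := by
    rcases lt_trichotomy c 0 with hlt | heq | hgt
    · exact div_pos_of_neg_of_neg hlt (by nlinarith)
    · exact absurd heq hc0
    · exact div_pos hgt (by nlinarith)
  have hzb : -1 < 2 * A / (c - 2 * A) := by
    have he : 2 * A / (c - 2 * A) = c / (c - 2 * A) - 1 := by
      field_simp
      ring
    rw [he]
    linarith [hzpos]
  refine ⟨hr0, hzb, ?_, ?_⟩
  · rw [hr0sq]
    have hckz' : c - A * 2 ≠ 0 := by rwa [mul_comm] at hckz
    field_simp
    ring
  · rw [hr0sq]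
    have hckz' : c - A * 2 ≠ 0 := by rwa [mul_comm] at hckz
    field_simp
    ring

/-- Root analysis of the first-order averaged function in Proposition 1.
With `A = a + b`, `k = 2A`, `d ≠ 0`, `c ≠ k`, the set `S` of pairs `(r, z)` with
`r > 0`, `z > -1` annihilating both numerators of the averaged function is a single
explicit point under the stated parameter restrictions, and empty otherwise. -/
theorem averaged_function_roots
    (a b c d A k : ℝ) (hd : d ≠ 0) (hA : A = a + b) (hk : k = 2 * A) (hck : c ≠ k)
    (S : Set (ℝ × ℝ))
    (hS : S = {p : ℝ × ℝ | 0 < p.1 ∧ -1 < p.2 ∧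
      3 * d * p.1 ^ 2 + 4 * p.2 * (1 + p.2) ^ 2 * (A + (A + c) * p.2) = 0 ∧
      d * p.1 ^ 2 + 2 * c * p.2 ^ 2 * (1 + p.2) ^ 2 = 0}) :
    ((c * A ≠ 0 ∧ c / d < 0 ∧ c ∉ Set.uIcc 0 k) →
      S = {(Real.sqrt (-8 * A ^ 2 * c ^ 3 / ((c - k) ^ 4 * d)), k / (c - k))}) ∧
    (¬ (c * A ≠ 0 ∧ c / d < 0 ∧ c ∉ Set.uIcc 0 k) → S = ∅) := by
  constructor
  · rintro ⟨hc1, hc2, hc3⟩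
    rw [hS]
    ext ⟨r, z⟩
    simp only [Set.mem_setOf_eq, Set.mem_singleton_iff, Prod.mk.injEq]
    constructor
    · rintro ⟨hr, hz, e1, e2⟩
      obtain ⟨_, hre, hze⟩ := averaged_aux_forward c d A k hd hk hck r z hr hz e1 e2
      exact ⟨hre, hze⟩
    · rintro ⟨rfl, rfl⟩
      obtain ⟨m1, m2, m3, m4⟩ := averaged_aux_mem c d A k hd hk hck hc1 hc2 hc3
      exact ⟨m1, m2, m3, m4⟩
  · intro hnot
    rw [hS, Set.eq_empty_iff_forall_notMem]
    rintro ⟨r, z⟩ ⟨hr, hz, e1, e2⟩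
    exact hnot (averaged_aux_forward c d A k hd hk hck r z hr hz e1 e2).1
end

section
/- Let b, c be real numbers with b·c ≠ 0. Define, for r > 0 and z > −1, the map ρ̄(r, z) = ( r·P(r², z) / (8(1+z)⁶), −z·Q(r², z) / (2(1+z)⁵) ), where P(u, z) = −b·c·u·(1+z)²·(2z − 1) and Q(u, z) = b·c·u·(1+z)². Then ρ̄ has no zero in the region {(r, z) : r > 0, z > −1}; that is, there is no pair (r, z) with r > 0 and z > −1 for which both components of ρ̄ vanish. -/
/-- Statement (iii) of Proposition 1: the second-order averaged function
`ρ̄(r,z) = (r P(r²,z)/(8(1+z)⁶), -z Q(r²,z)/(2(1+z)⁵))` with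
`P(u,z) = -bcu(1+z)²(2z-1)` and `Q(u,z) = bcu(1+z)²` has no zero with
`r > 0` and `z > -1`, provided `bc ≠ 0`. -/
theorem second_order_averaged_no_zero
    (b c : ℝ) (hbc : b * c ≠ 0)
    (P Q : ℝ → ℝ → ℝ)
    (hP : ∀ u z, P u z = -b * c * u * (1 + z) ^ 2 * (2 * z - 1))
    (hQ : ∀ u z, Q u z = b * c * u * (1 + z) ^ 2) :
    ¬ ∃ r z : ℝ, 0 < r ∧ -1 < z ∧
      r * P (r ^ 2) z / (8 * (1 + z) ^ 6) = 0 ∧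
      -z * Q (r ^ 2) z / (2 * (1 + z) ^ 5) = 0 := by
  rintro ⟨r, z, hr, hz, h1, h2⟩
  have hzpos : (0:ℝ) < 1 + z := by linarith
  have hz6 : (8 * (1 + z) ^ 6) ≠ 0 := by positivity
  have hz5 : (2 * (1 + z) ^ 5) ≠ 0 := by positivity
  rw [hP, div_eq_zero_iff] at h1
  rw [hQ, div_eq_zero_iff] at h2
  have hr2 : r ^ 2 ≠ 0 := by positivity
  have hz2 : (1 + z) ^ 2 ≠ 0 := by positivity
  have h1' : 2 * z - 1 = 0 := by
    rcases h1 with h1 | h1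
    · by_contra hne
      have hne2 : r * (-b * c * r ^ 2 * (1 + z) ^ 2 * (2 * z - 1)) ≠ 0 := by
        apply mul_ne_zero hr.ne'
        apply mul_ne_zero _ hne
        apply mul_ne_zero _ hz2
        apply mul_ne_zero _ hr2
        simpa using hbc
      exact hne2 h1
    · exact absurd h1 hz6
  have hzval : z = 1/2 := by linarith
  rcases h2 with h2 | h2
  · have hne2 : -z * (b * c * r ^ 2 * (1 + z) ^ 2) ≠ 0 := by
      apply mul_ne_zero
      · rw [hzval]; norm_num
      · exact mul_ne_zero (mul_ne_zero hbc hr2) hz2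
    exact hne2 h2
  · exact hz5 h2
end

section
/- Let α₁, β₁, γ₁, α₂, β₂, γ₂ be real numbers with α₁ ≠ 0 and (α₁γ₂ − γ₁β₂, β₁β₂ + γ₁α₂, β₁α₂) ≠ (0, 0, 0). Then the set of pairs (r, w) ∈ ℝ² with r > 0 satisfying simultaneously r·(α₁r² + β₁w + γ₁w²) = 0 and α₂r² + β₂r²w + γ₂w³ = 0 has at most two elements. -/
open Polynomial

/-- Counting argument in Proposition 2 (ii): for the cubic reduced bifurcation map
`G†(r,w) = (r(α₁r² + β₁w + γ₁w²), α₂r² + β₂r²w + γ₂w³)` with `α₁ ≠ 0` and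
`(α₁γ₂ - γ₁β₂, β₁β₂ + γ₁α₂, β₁α₂) ≠ (0,0,0)`, there are at most two zeros with `r > 0`. -/
theorem cubic_bifurcation_at_most_two_zeros
    (α₁ β₁ γ₁ α₂ β₂ γ₂ : ℝ) (hα₁ : α₁ ≠ 0)
    (hne : (α₁ * γ₂ - γ₁ * β₂, β₁ * β₂ + γ₁ * α₂, β₁ * α₂) ≠ ((0 : ℝ), (0 : ℝ), (0 : ℝ))) :
    {p : ℝ × ℝ | 0 < p.1 ∧
        p.1 * (α₁ * p.1 ^ 2 + β₁ * p.2 + γ₁ * p.2 ^ 2) = 0 ∧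
        α₂ * p.1 ^ 2 + β₂ * p.1 ^ 2 * p.2 + γ₂ * p.2 ^ 3 = 0}.encard ≤ 2 := by
  set S : Set (ℝ × ℝ) := {p : ℝ × ℝ | 0 < p.1 ∧
        p.1 * (α₁ * p.1 ^ 2 + β₁ * p.2 + γ₁ * p.2 ^ 2) = 0 ∧
        α₂ * p.1 ^ 2 + β₂ * p.1 ^ 2 * p.2 + γ₂ * p.2 ^ 3 = 0} with hS
  set Q : ℝ[X] := C (α₁ * γ₂ - γ₁ * β₂) * X ^ 2 + C (-(β₁ * β₂ + γ₁ * α₂)) * X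
      + C (-(β₁ * α₂)) with hQ
  have hne' : ¬(α₁ * γ₂ - γ₁ * β₂ = 0 ∧ β₁ * β₂ + γ₁ * α₂ = 0 ∧ β₁ * α₂ = 0) := by
    simpa [Prod.ext_iff] using hne
  have hQ0 : Q ≠ 0 := by
    intro h
    have c0 : Q.coeff 0 = -(β₁ * α₂) := by
      simp only [hQ, coeff_add, coeff_C_mul, coeff_X_pow, coeff_X, coeff_C]; norm_num
    have c1 : Q.coeff 1 = -(β₁ * β₂ + γ₁ * α₂) := by
      simp only [hQ, coeff_add, coeff_C_mul, coeff_X_pow, coeff_X, coeff_C]; norm_num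
    have c2 : Q.coeff 2 = α₁ * γ₂ - γ₁ * β₂ := by
      simp only [hQ, coeff_add, coeff_C_mul, coeff_X_pow, coeff_X, coeff_C]; norm_num
    rw [h] at c0 c1 c2
    simp only [coeff_zero] at c0 c1 c2
    exact hne' ⟨by linarith, by linarith, by linarith⟩
  -- first component equation simplified
  have key : ∀ p ∈ S, α₁ * p.1 ^ 2 + β₁ * p.2 + γ₁ * p.2 ^ 2 = 0 := by
    rintro ⟨r, w⟩ ⟨hr, h1, h2⟩
    rcases mul_eq_zero.1 h1 with h | h
    · exact absurd h (ne_of_gt hr)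
    · exact h
  have hinj : Set.InjOn Prod.snd S := by
    rintro ⟨r, w⟩ hp ⟨r', w'⟩ hp' (h : w = w')
    subst h
    have e1 := key _ hp
    have e2 := key _ hp'
    have : α₁ * r ^ 2 = α₁ * r' ^ 2 := by dsimp at e1 e2; linarith
    have hr2 : r ^ 2 = r' ^ 2 := mul_left_cancel₀ hα₁ this
    have : r = r' := by
      have hr : 0 < r := hp.1
      have hr' : 0 < r' := hp'.1
      nlinarith [sq_nonneg (r - r')]
    simp [this]
  have hmaps : Set.MapsTo Prod.snd S (Q.roots.toFinset : Set ℝ) := by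
    rintro ⟨r, w⟩ hp
    have hr : 0 < r := hp.1
    have e1 : α₁ * r ^ 2 + β₁ * w + γ₁ * w ^ 2 = 0 := key _ hp
    have e2 : α₂ * r ^ 2 + β₂ * r ^ 2 * w + γ₂ * w ^ 3 = 0 := hp.2.2
    have hw : w ≠ 0 := by
      intro h
      subst h
      simp at e1
      rcases e1 with h | h
      · exact hα₁ h
      · exact absurd h (ne_of_gt hr)
    have heval : Q.eval w = 0 := by
      have hmul : w * Q.eval w = 0 := by
        simp only [hQ, eval_add, eval_mul, eval_C, eval_pow, eval_X]
        linear_combination α₁ * e2 - (α₂ + β₂ * w) * e1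
      rcases mul_eq_zero.1 hmul with h | h
      · exact absurd h hw
      · exact h
    simp only [Multiset.mem_toFinset, Finset.coe_sort_coe, Finset.mem_coe]
    rw [mem_roots hQ0]
    exact heval
  calc S.encard = (Prod.snd '' S).encard := (Set.InjOn.encard_image hinj).symm
    _ ≤ (Q.roots.toFinset : Set ℝ).encard := Set.encard_le_encard (Set.image_subset_iff.2 hmaps)
    _ = (Q.roots.toFinset.card : ℕ∞) := Set.encard_coe_eq_coe_finsetCard _
    _ ≤ 2 := by
      have h1 : Q.roots.toFinset.card ≤ Multiset.card Q.roots := Q.roots.toFinset_card_le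
      have h2 : Multiset.card Q.roots ≤ Q.natDegree := Q.card_roots'
      have h3 : Q.natDegree ≤ 2 := by rw [hQ]; compute_degree
      exact_mod_cast le_trans h1 (le_trans h2 h3)
end

section
/- For every m ∈ {0, 1, 2} there exist real numbers α₁, β₁, γ₁, α₂, β₂, γ₂ with α₁ ≠ 0 such that the set of pairs (r, w) ∈ ℝ² with r > 0 satisfying simultaneously r·(α₁r² + β₁w + γ₁w²) = 0 and α₂r² + β₂r²w + γ₂w³ = 0 has exactly m elements. -/
/-- Realizability claim of Proposition 2 (ii): every `m ∈ {0, 1, 2}` is realized as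
the exact number of zeros with `r > 0` of the cubic reduced bifurcation map
`G†(r,w) = (r(α₁r² + β₁w + γ₁w²), α₂r² + β₂r²w + γ₂w³)` for suitable parameters. -/
theorem cubic_bifurcation_zero_count_realizable
    (m : ℕ) (hm : m ∈ ({0, 1, 2} : Set ℕ)) :
    ∃ α₁ β₁ γ₁ α₂ β₂ γ₂ : ℝ, α₁ ≠ 0 ∧
      ({p : ℝ × ℝ | 0 < p.1 ∧
          p.1 * (α₁ * p.1 ^ 2 + β₁ * p.2 + γ₁ * p.2 ^ 2) = 0 ∧
          α₂ * p.1 ^ 2 + β₂ * p.1 ^ 2 * p.2 + γ₂ * p.2 ^ 3 = 0}).encard = m := by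
  rcases hm with rfl | rfl | rfl
  · -- m = 0 : take α₁ = 1, everything else forcing no solutions
    refine ⟨1, 0, 0, 1, 0, 0, one_ne_zero, ?_⟩
    have : ({p : ℝ × ℝ | 0 < p.1 ∧
        p.1 * (1 * p.1 ^ 2 + 0 * p.2 + 0 * p.2 ^ 2) = 0 ∧
        1 * p.1 ^ 2 + 0 * p.1 ^ 2 * p.2 + 0 * p.2 ^ 3 = 0} : Set (ℝ × ℝ)) = ∅ := by
      ext ⟨r, w⟩
      simp only [Set.mem_setOf_eq, Set.mem_empty_iff_false, iff_false, not_and]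
      intro hr h1
      nlinarith
    rw [this]
    simp
  · -- m = 1
    refine ⟨-1, 1, 0, -1, 1, 0, by norm_num, ?_⟩
    have : ({p : ℝ × ℝ | 0 < p.1 ∧
        p.1 * (-1 * p.1 ^ 2 + 1 * p.2 + 0 * p.2 ^ 2) = 0 ∧
        -1 * p.1 ^ 2 + 1 * p.1 ^ 2 * p.2 + 0 * p.2 ^ 3 = 0} : Set (ℝ × ℝ))
        = {((1 : ℝ), (1 : ℝ))} := by
      ext ⟨r, w⟩
      simp only [Set.mem_setOf_eq, Set.mem_singleton_iff, Prod.mk.injEq]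
      constructor
      · rintro ⟨hr, h1, h2⟩
        have hw : w = r ^ 2 := by
          have := mul_eq_zero.mp h1
          rcases this with h | h
          · exact absurd h (ne_of_gt hr)
          · nlinarith
        have hw1 : w = 1 := by
          have hr2 : r ^ 2 ≠ 0 := pow_ne_zero _ (ne_of_gt hr)
          have : r ^ 2 * (w - 1) = 0 := by nlinarith
          rcases mul_eq_zero.mp this with h | h
          · exact absurd h hr2
          · linarith
        have : r = 1 := by nlinarith
        exact ⟨this, hw1⟩
      · rintro ⟨rfl, rfl⟩
        norm_num
    rw [this]
    simp
  · -- m = 2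
    refine ⟨-1, 1, 0, 2, -3, 1, by norm_num, ?_⟩
    have hsqrt2 : Real.sqrt 2 ^ 2 = 2 := Real.sq_sqrt (by norm_num)
    have hsqrt2pos : (0 : ℝ) < Real.sqrt 2 := Real.sqrt_pos.mpr (by norm_num)
    have : ({p : ℝ × ℝ | 0 < p.1 ∧
        p.1 * (-1 * p.1 ^ 2 + 1 * p.2 + 0 * p.2 ^ 2) = 0 ∧
        2 * p.1 ^ 2 + -3 * p.1 ^ 2 * p.2 + 1 * p.2 ^ 3 = 0} : Set (ℝ × ℝ))
        = {((1 : ℝ), (1 : ℝ)), (Real.sqrt 2, (2 : ℝ))} := by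
      ext ⟨r, w⟩
      simp only [Set.mem_setOf_eq, Set.mem_insert_iff, Set.mem_singleton_iff, Prod.mk.injEq]
      constructor
      · rintro ⟨hr, h1, h2⟩
        have hw : w = r ^ 2 := by
          rcases mul_eq_zero.mp h1 with h | h
          · exact absurd h (ne_of_gt hr)
          · nlinarith
        have hwpos : 0 < w := hw ▸ pow_pos hr 2
        -- 2w - 3w² + w³ = 0, i.e. w(w-1)(w-2)=0
        have hcube : w * ((w - 1) * (w - 2)) = 0 := by nlinarith
        rcases mul_eq_zero.mp hcube with h | h
        · exact absurd h (ne_of_gt hwpos)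
        rcases mul_eq_zero.mp h with h | h
        · left
          have hw1 : w = 1 := by linarith
          have : r = 1 := by nlinarith
          exact ⟨this, hw1⟩
        · right
          have hw2 : w = 2 := by linarith
          have hr2 : r ^ 2 = 2 := by rw [← hw2, hw]
          have : r = Real.sqrt 2 := by
            nlinarith [hsqrt2, hsqrt2pos]
          exact ⟨this, hw2⟩
      · rintro (⟨rfl, rfl⟩ | ⟨rfl, rfl⟩)
        · norm_num
        · refine ⟨hsqrt2pos, ?_, ?_⟩ <;> nlinarith [hsqrt2]
    rw [this]
    rw [Set.encard_pair (by
      intro h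
      have := congrArg Prod.snd h
      norm_num at this)]
    rfl
end
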